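/- Let 𝐅 be a CM-field, i.e., a field algebraic over ℚ admitting no ring homomorphism into ℝ, equipped with a field automorphism σ of 𝐅 with σ ∘ σ = id whose fixed field 𝐋 = {x ∈ 𝐅 : σ(x) = x} is totally real. Let n ≥ 3 be a rational integer and let I be an ideal of 𝒪_𝐅 with I ⊆ n·𝒪_𝐅. Then for every unit x of 𝒪_𝐅 with x ≡ 1 (mod I) (i.e., x − 1 ∈ I), one has x² ∈ 𝐋, i.e., σ(x²) = x². -/

import Mathlib

/-- The fixed subfield of a field automorphism. -/
def fixedSubfield {F : Type*} [Field F] (σ : F ≃+* F) : Subfield F where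
  carrier := {x | σ x = x}
  mul_mem' := by
    intro a b (ha : σ a = a) (hb : σ b = b)
    show σ (a * b) = a * b
    rw [map_mul, ha, hb]
  one_mem' := by show σ 1 = 1; exact map_one σ
  add_mem' := by
    intro a b (ha : σ a = a) (hb : σ b = b)
    show σ (a + b) = a + b
    rw [map_add, ha, hb]
  zero_mem' := by show σ 0 = 0; exact map_zero σ
  neg_mem' := by
    intro a (ha : σ a = a)
    show σ (-a) = -a
    rw [map_neg, ha]
  inv_mem' := by
    intro a (ha : σ a = a)
    show σ a⁻¹ = a⁻¹
    rw [map_inv₀, ha]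

lemma conj_comp_eq {F : Type*} [Field F] (hcm : IsEmpty (F →+* ℝ))
    (σ : F ≃+* F) (hσ : ∀ y : F, σ (σ y) = y)
    (htr : ∀ (τ : ↥(fixedSubfield σ) →+* ℂ) (y : ↥(fixedSubfield σ)), (τ y).im = 0)
    (τ : F →+* ℂ) : ∀ z : F, (starRingEnd ℂ) (τ z) = τ (σ z) := by
  set ρ : F →+* ℂ := (starRingEnd ℂ).comp τ with hρ
  have hL : ∀ y : F, σ y = y → ρ y = τ y := by
    intro y hy
    have him : (τ y).im = 0 := htr (τ.comp (fixedSubfield σ).subtype) ⟨y, hy⟩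
    show (starRingEnd ℂ) (τ y) = τ y
    exact Complex.conj_eq_iff_im.mpr him
  have key : ∀ z : F, ρ z = τ z ∨ ρ z = τ (σ z) := by
    intro z
    have e1 : ρ (z + σ z) = τ (z + σ z) := hL _ (by rw [map_add, hσ, add_comm])
    have e2 : ρ (z * σ z) = τ (z * σ z) := hL _ (by rw [map_mul, hσ, mul_comm])
    have h0 : (ρ z - τ z) * (ρ z - τ (σ z)) = 0 := by
      have expand : (ρ z - τ z) * (ρ z - τ (σ z))
          = ρ z * ρ z - τ (z + σ z) * ρ z + τ (z * σ z) := by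
        rw [map_add, map_mul]; ring
      rw [expand, ← e1, ← e2, map_add, map_mul]; ring
    rcases mul_eq_zero.mp h0 with h | h
    · exact Or.inl (sub_eq_zero.mp h)
    · exact Or.inr (sub_eq_zero.mp h)
  by_contra hglob
  push_neg at hglob
  obtain ⟨b, hb⟩ := hglob
  have hbA : ρ b = τ b := (key b).resolve_right hb
  have hall : ∀ z : F, ρ z = τ z := by
    intro z
    rcases key z with h | h
    · exact h
    · -- ρ z = τ (σ z); consider z + b
      by_cases hz : ρ z = τ z
      · exact hz
      rcases key (z + b) with h2 | h2
      · rw [map_add, map_add, hbA] at h2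
        exact add_right_cancel h2
      · rw [map_add, map_add, map_add, h] at h2
        have : ρ b = τ (σ b) := by
          have := add_left_cancel h2
          exact this
        exact absurd this hb
  -- τ has real image; build F →+* ℝ
  have him : ∀ z : F, (τ z).im = 0 := by
    intro z
    have := hall z
    rw [hρ] at this
    exact Complex.conj_eq_iff_im.mp this
  have f : F →+* ℝ := {
    toFun := fun z => (τ z).re
    map_one' := by simp
    map_mul' := by
      intro a b
      simp [Complex.mul_re, him a, him b]
    map_zero' := by simp
    map_add' := by intro a b; simp }
  exact hcm.elim f

open Polynomial in

lemma small_int_zero {F : Type*} [Field F] [CharZero F] [Algebra.IsAlgebraic ℚ F]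
    (w : F) (hw : IsIntegral ℤ w)
    (h : ∀ τ : F →+* ℂ, ‖τ w‖ ≤ 2/3) : w = 0 := by
  by_contra hw0
  have hwQ : IsIntegral ℚ w := Algebra.IsIntegral.isIntegral w
  set p : ℚ[X] := minpoly ℚ w with hp
  have hpmonic : p.Monic := minpoly.monic hwQ
  have hc0 : p.coeff 0 ≠ 0 := minpoly.coeff_zero_ne_zero hwQ hw0
  -- coeff 0 is an integer
  have hint : ∃ c : ℤ, (c : ℚ) = p.coeff 0 := by
    have h2 : minpoly ℚ w = map (algebraMap ℤ ℚ) (minpoly ℤ w) := by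
      simpa using minpoly.isIntegrallyClosed_eq_field_fractions ℚ F hw
    refine ⟨(minpoly ℤ w).coeff 0, ?_⟩
    rw [hp, h2, coeff_map]; rfl
  obtain ⟨c, hc⟩ := hint
  have hc1 : (1:ℝ) ≤ |(p.coeff 0 : ℚ)| := by
    have hcne : c ≠ 0 := by rintro rfl; simp at hc; exact hc0 hc.symm
    have : (1:ℚ) ≤ |(c:ℚ)| := by exact_mod_cast Int.one_le_abs hcne
    rw [hc] at this
    exact_mod_cast this
  -- map to ℂ
  set q : ℂ[X] := p.map (algebraMap ℚ ℂ) with hq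
  have hqmonic : q.Monic := hpmonic.map _
  have hsplitQ : (p.map (algebraMap ℚ ℂ)).Splits := IsAlgClosed.splits _
  have hsplit : q.Splits := hsplitQ
  have hdeg : q.natDegree = p.natDegree := natDegree_map _
  have hd1 : 1 ≤ p.natDegree := minpoly.natDegree_pos hwQ
  -- each root has small abs
  have hroots : ∀ r ∈ q.roots, ‖r‖ ≤ 2/3 := by
    intro r hr
    have hrset : r ∈ p.rootSet ℂ := by
      rw [mem_rootSet]
      refine ⟨minpoly.ne_zero hwQ, ?_⟩
      rw [aeval_def, ← eval_map]
      exact isRoot_of_mem_roots hr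
    rw [← Algebra.IsAlgebraic.range_eval_eq_rootSet_minpoly ℂ w] at hrset
    obtain ⟨ψ, hψ⟩ := hrset
    rw [← hψ]
    exact h ψ.toRingHom
  -- product of roots
  have hcard : q.roots.card = q.natDegree := splits_iff_card_roots.mp hsplit
  have habs : ‖q.coeff 0‖ = (q.roots.map (‖·‖)).prod := by
    have heq : q = (q.roots.map fun a => X - C a).prod :=
      hsplit.eq_prod_roots_of_monic hqmonic
    calc ‖q.coeff 0‖ = ‖q.eval 0‖ := by rw [coeff_zero_eq_eval_zero]
    _ = ‖(q.roots.map fun a => -a).prod‖ := by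
        conv_lhs => rw [heq]
        rw [eval_multiset_prod, Multiset.map_map]
        simp [Function.comp]
    _ = ((q.roots.map fun a => -a).map (‖·‖)).prod := by
        exact map_multiset_prod (normHom : ℂ →*₀ ℝ) _
    _ = (q.roots.map (‖·‖)).prod := by
        rw [Multiset.map_map]; simp [Function.comp]
  -- bound
  have key : ∀ s : Multiset ℝ, (∀ y ∈ s, 0 ≤ y ∧ y ≤ (2/3:ℝ)) → s.prod ≤ (2/3:ℝ) ^ s.card := by
    intro s
    induction s using Multiset.induction with
    | empty => simp
    | cons a t ih =>
      intro hyp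
      simp only [Multiset.prod_cons, Multiset.card_cons, pow_succ]
      have ha := hyp a (Multiset.mem_cons_self a t)
      have ht : ∀ y ∈ t, 0 ≤ y ∧ y ≤ (2/3:ℝ) := fun y hy => hyp y (Multiset.mem_cons_of_mem hy)
      have htp : (0:ℝ) ≤ t.prod := Multiset.prod_nonneg fun y hy => (ht y hy).1
      calc a * t.prod ≤ (2/3:ℝ) ^ t.card * (2/3) := by
            rw [mul_comm a t.prod]
            exact mul_le_mul (ih ht) ha.2 ha.1 (by positivity)
      _ = (2/3:ℝ) ^ t.card * (2/3) := rfl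
  have hle : (q.roots.map (‖·‖)).prod ≤ (2/3 : ℝ) ^ q.roots.card := by
    have := key (q.roots.map (‖·‖)) (by
      intro y hy
      obtain ⟨r, hr, rfl⟩ := Multiset.mem_map.mp hy
      exact ⟨norm_nonneg _, hroots r hr⟩)
    simpa using this
  have hpow : ((2:ℝ)/3) ^ q.roots.card ≤ 2/3 := by
    have h1 : 1 ≤ q.roots.card := by omega
    calc ((2:ℝ)/3) ^ q.roots.card ≤ (2/3) ^ 1 := by
          apply pow_le_pow_of_le_one (by norm_num) (by norm_num) h1
    _ = 2/3 := pow_one _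
  have hlhs : (1:ℝ) ≤ ‖q.coeff 0‖ := by
    have : q.coeff 0 = ((p.coeff 0 : ℚ) : ℂ) := by rw [hq, coeff_map]; rfl
    rw [this]
    calc (1:ℝ) ≤ |(p.coeff 0 : ℚ)| := hc1
    _ = ‖((p.coeff 0 : ℚ) : ℂ)‖ := by
          rw [show ((p.coeff 0 : ℚ) : ℂ) = (((p.coeff 0 : ℚ) : ℝ) : ℂ) by push_cast; ring,
            Complex.norm_real, Real.norm_eq_abs]
          simp [Rat.cast_abs]
  linarith [habs ▸ hlhs, hle.trans hpow]

/-- Lemma `Dirichlet`.  Let `𝐅` be a CM-field: a totally complex field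
algebraic over `ℚ` with an involution `σ` whose fixed field `𝐋` is totally real.  Let
`n ≥ 3` and `I ⊆ n·𝒪_𝐅` an ideal of `𝒪_𝐅`.  Then every unit `x` of `𝒪_𝐅` with
`x ≡ 1 (mod I)` satisfies `x² ∈ 𝐋`, i.e. `σ(x²) = x²`. -/
theorem stmt_17 (F : Type*) [Field F] [CharZero F] [Algebra.IsAlgebraic ℚ F]
    (hcm : IsEmpty (F →+* ℝ))
    (σ : F ≃+* F) (hσ : ∀ y : F, σ (σ y) = y)
    (htr : ∀ (τ : ↥(fixedSubfield σ) →+* ℂ) (y : ↥(fixedSubfield σ)), (τ y).im = 0)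
    (n : ℤ) (hn : 3 ≤ n)
    (I : Ideal (integralClosure ℤ F))
    (hI : I ≤ Ideal.span {(n : integralClosure ℤ F)})
    (x : (integralClosure ℤ F)ˣ)
    (hx : (x : integralClosure ℤ F) - 1 ∈ I) :
    σ (((x : integralClosure ℤ F) : F) ^ 2) = ((x : integralClosure ℤ F) : F) ^ 2 := by
  set X : F := ((x : integralClosure ℤ F) : F) with hX
  set X' : F := (((x⁻¹ : (integralClosure ℤ F)ˣ) : integralClosure ℤ F) : F) with hX'
  have hXX' : X * X' = 1 := by
    have h1 : (x : integralClosure ℤ F) * ((x⁻¹ : (integralClosure ℤ F)ˣ) : integralClosure ℤ F)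
        = 1 := by
      rw [← Units.val_mul, mul_inv_cancel, Units.val_one]
    rw [hX, hX']
    exact_mod_cast h1
  -- divisibility
  obtain ⟨a, ha⟩ : (n : integralClosure ℤ F) ∣ ((x : integralClosure ℤ F) - 1) :=
    (Ideal.mem_span_singleton).mp (hI hx)
  set A : F := (a : F) with hA
  have haF : X - 1 = (n : F) * A := by
    rw [hX, hA]
    exact_mod_cast ha
  -- σ preserves integrality
  have hσint : ∀ z : F, IsIntegral ℤ z → IsIntegral ℤ (σ z) := fun z hz =>
    hz.map (σ : F →+* F).toIntAlgHom
  have hσn : σ ((n : F)) = (n : F) := by simpa using map_intCast (σ : F →+* F) n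
  -- u := X * σ X'
  set u : F := X * σ X' with hu
  have hσXX' : σ X * σ X' = 1 := by rw [← map_mul, hXX', map_one]
  have huσu : u * σ u = 1 := by
    have hσu : σ u = σ X * X' := by rw [hu, map_mul, hσ]
    rw [hu, hσu]
    calc X * σ X' * (σ X * X') = (X * X') * (σ X * σ X') := by ring
    _ = 1 := by rw [hXX', hσXX', mul_one]
  -- u - 1 = n * w with w integral
  set w : F := (A - σ A) * σ X' with hw
  have hun : u - 1 = (n : F) * w := by
    have h1 : u - 1 = (X - σ X) * σ X' := by
      rw [hu]
      have : (X - σ X) * σ X' = X * σ X' - σ X * σ X' := by ring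
      rw [this, hσXX']
    have hσX : σ X - 1 = (n : F) * σ A := by
      have := congrArg σ haF
      rw [map_sub, map_one, map_mul, hσn] at this
      exact this
    have h2 : X - σ X = (n : F) * (A - σ A) := by
      have e : X - σ X = (X - 1) - (σ X - 1) := by ring
      rw [e, haF, hσX]; ring
    rw [h1, h2, hw]; ring
  have hwint : IsIntegral ℤ w := by
    have hX'int : IsIntegral ℤ X' := ((x⁻¹ : (integralClosure ℤ F)ˣ) : integralClosure ℤ F).2
    have hAint : IsIntegral ℤ A := a.2
    exact (hAint.sub (hσint _ hAint)).mul (hσint _ hX'int)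
  -- each embedding sends w to something small
  have hsmall : ∀ τ : F →+* ℂ, ‖τ w‖ ≤ 2/3 := by
    intro τ
    have hconj := conj_comp_eq hcm σ hσ htr τ
    have habs_u : ‖τ u‖ = 1 := by
      have h1 : τ u * (starRingEnd ℂ) (τ u) = 1 := by
        rw [hconj u, ← map_mul, huσu, map_one]
      rw [Complex.mul_conj] at h1
      have h2 : Complex.normSq (τ u) = 1 := by exact_mod_cast h1
      have h3 := Complex.sq_norm (τ u)
      nlinarith [norm_nonneg (τ u)]
    have h1 : τ u - 1 = (n : ℂ) * τ w := by
      rw [show τ u - 1 = τ (u - 1) by rw [map_sub, map_one], hun, map_mul, map_intCast]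
    have h2 : ‖τ u - 1‖ ≤ 2 := by
      calc ‖τ u - 1‖ ≤ ‖τ u‖ + ‖(1:ℂ)‖ :=
            norm_sub_le _ _
      _ = 2 := by rw [habs_u, norm_one]; norm_num
    have h3 : ‖(n : ℂ)‖ = (n : ℝ) := by
      rw [Complex.norm_intCast]
      exact abs_of_nonneg (by exact_mod_cast (by omega : (0:ℤ) ≤ n))
    have h4 : ‖τ u - 1‖ = (n : ℝ) * ‖τ w‖ := by
      rw [h1, norm_mul, h3]
    have hn3 : (3 : ℝ) ≤ (n : ℝ) := by exact_mod_cast hn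
    have h5 := norm_nonneg (τ w)
    nlinarith
  have hw0 : w = 0 := small_int_zero w hwint hsmall
  -- conclude
  have hu1 : u = 1 := by
    have := hun
    rw [hw0, mul_zero] at this
    exact sub_eq_zero.mp this
  have hne : σ X' ≠ 0 := by
    intro h; rw [h, mul_zero] at hσXX'; exact one_ne_zero hσXX'.symm
  have hfix : σ X = X := by
    have : X * σ X' = σ X * σ X' := by rw [hσXX', ← hu, hu1]
    exact (mul_right_cancel₀ hne this).symm
  rw [map_pow, hfix]
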